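/- arXiv:1605.05783 — 5 statements merged into one kernel-verified Lean document; each statement's English description precedes it below -/
import Mathlib

section
/- Let g be a nonzero polynomial in k[x_0,…,x_n] such that for every variable x_i, some monomial in the support of g has exponent 0 in x_i (equivalently, no variable divides g). Then the Newton dual of the Newton dual of g equals g, i.e., ĝ̂ = g. -/
open MvPolynomial Finset

/-- Newton complementary dual of `g` relative to a given directrix vector `β`. -/
noncomputable def newtonDualWith {k : Type*} [CommSemiring k] {N : ℕ}
    (β : Fin N → ℕ) (g : MvPolynomial (Fin N) k) : MvPolynomial (Fin N) k :=
  ∑ a ∈ g.support,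
    monomial (Finsupp.equivFunOnFinite.symm fun i => β i - a i) (coeff a g)

/-- Newton complementary dual of a single form: directrix vector `β i = degreeOf i g`. -/
noncomputable def newtonDual {k : Type*} [CommSemiring k] {N : ℕ}
    (g : MvPolynomial (Fin N) k) : MvPolynomial (Fin N) k :=
  newtonDualWith (fun i => g.degreeOf i) g

/-- The `i`-th coordinate of the Magnus reciprocal involution: `∏_{j ≠ i} x_j`. -/
noncomputable def magnus (k : Type*) [CommSemiring k] (N : ℕ) (i : Fin N) :
    MvPolynomial (Fin N) k :=
  ∏ j ∈ Finset.univ.erase i, X j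

theorem newtonDual_newtonDual {k : Type*} [Field k] {n : ℕ}
    (g : MvPolynomial (Fin (n + 1)) k) (hg : g ≠ 0)
    (h : ∀ i, ∃ a ∈ g.support, a i = 0) :
    newtonDual (newtonDual g) = g := by
  classical
  set β : Fin (n + 1) → ℕ := fun i => g.degreeOf i with hβ
  have hle : ∀ a ∈ g.support, ∀ i, a i ≤ β i := by
    intro a ha i
    simpa [hβ, degreeOf_eq_sup] using Finset.le_sup (f := fun m => m i) ha
  set φ : (Fin (n + 1) →₀ ℕ) → (Fin (n + 1) →₀ ℕ) :=
    fun a => Finsupp.equivFunOnFinite.symm fun i => β i - a i with hφ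
  have hφapp : ∀ a i, φ a i = β i - a i := fun a i => rfl
  have hφφ : ∀ a ∈ g.support, φ (φ a) = a := by
    intro a ha
    ext i
    rw [hφapp, hφapp, Nat.sub_sub_self (hle a ha i)]
  have hinj : ∀ a ∈ g.support, ∀ b ∈ g.support, φ a = φ b → a = b := by
    intro a ha b hb hab
    have := congrArg (φ ·) hab
    simpa [hφφ a ha, hφφ b hb] using this
  have hcoeff : ∀ a ∈ g.support, coeff (φ a) (newtonDualWith β g) = coeff a g := by
    intro a ha
    rw [newtonDualWith, coeff_sum, Finset.sum_eq_single a]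
    · simp [coeff_monomial, hφ]
    · intro b hb hne
      rw [coeff_monomial, if_neg]
      intro hEq
      exact hne (hinj b hb a ha hEq)
    · intro hna; exact absurd ha hna
  have hsupp : (newtonDualWith β g).support = g.support.image φ := by
    ext m
    simp only [mem_support_iff, Finset.mem_image]
    constructor
    · intro hm
      by_contra hc
      push_neg at hc
      apply hm
      rw [newtonDualWith, coeff_sum]
      apply Finset.sum_eq_zero
      intro a ha
      rw [coeff_monomial, if_neg]
      intro hEq
      exact hc a (mem_support_iff.mp ha) hEq
    · rintro ⟨a, ha, rfl⟩
      rw [hcoeff a (mem_support_iff.mpr ha)]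
      exact ha
  have hdeg : ∀ i, (newtonDualWith β g).degreeOf i = β i := by
    intro i
    rw [degreeOf_eq_sup, hsupp, Finset.sup_image]
    apply le_antisymm
    · exact Finset.sup_le fun a ha => Nat.sub_le _ _
    · obtain ⟨a, ha, ha0⟩ := h i
      have : (φ a) i = β i := by rw [hφapp, ha0, Nat.sub_zero]
      calc β i = (φ a) i := this.symm
        _ ≤ _ := Finset.le_sup (f := fun a => (φ ∘ fun a => a) a i) ha
  have h1 : newtonDual g = newtonDualWith β g := rfl
  rw [newtonDual, h1]
  have h2 : (fun i => (newtonDualWith β g).degreeOf i) = β := funext hdeg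
  rw [h2]
  rw [newtonDualWith, hsupp, Finset.sum_image (fun a ha b hb => hinj a ha b hb)]
  have : ∀ a ∈ g.support,
      monomial (Finsupp.equivFunOnFinite.symm fun i => β i - (φ a) i) (coeff (φ a) (newtonDualWith β g))
      = monomial a (coeff a g) := by
    intro a ha
    rw [hcoeff a ha]
    congr 1
    have : (Finsupp.equivFunOnFinite.symm fun i => β i - (φ a) i) = φ (φ a) := rfl
    rw [this, hφφ a ha]
  rw [Finset.sum_congr rfl this]
  exact g.support_sum_monomial_coeff
end

section
/- Let g be a nonzero homogeneous polynomial of degree d ≥ 1 in R = k[x_0,…,x_n] with n ≥ 1, with directrix vector β (β_i = deg_{x_i}(g)) and Newton dual ĝ. Let x̂ = (x̂_0,…,x̂_n) with x̂_i = ∏_{j≠i} x_j. Then g(x̂_0,…,x̂_n) = x_0^{d−β_0} ⋯ x_n^{d−β_n} · ĝ. -/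
open MvPolynomial Finset

theorem eval_magnus_eq_monomial_mul_newtonDual {k : Type*} [Field k] {n d : ℕ}
    (hn : 1 ≤ n) (hd : 1 ≤ d) (g : MvPolynomial (Fin (n + 1)) k)
    (hg : g ≠ 0) (hhom : g.IsHomogeneous d) :
    aeval (magnus k (n + 1)) g =
      (∏ i, X i ^ (d - g.degreeOf i)) * newtonDual g := by
  classical
  have htd : g.totalDegree = d := hhom.totalDegree hg
  have hβ : ∀ i, g.degreeOf i ≤ d := fun i => htd ▸ degreeOf_le_totalDegree g i
  conv_lhs => rw [g.as_sum]
  rw [map_sum, newtonDual, newtonDualWith, Finset.mul_sum]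
  refine Finset.sum_congr rfl fun a ha => ?_
  have haβ : ∀ i, a i ≤ g.degreeOf i := fun i => by
    rw [degreeOf_eq_sup]; exact Finset.le_sup (f := fun m => m i) ha
  have hsum : ∑ i, a i = d := by
    have := hhom (mem_support_iff.mp ha)
    rw [← this, Pi.one_def, ← Finsupp.degree_eq_weight_one, Finsupp.degree_eq_sum]
  have had : ∀ i, a i ≤ d := fun i => (haβ i).trans (hβ i)
  -- compute LHS
  rw [aeval_monomial, Finsupp.prod_fintype _ _ (fun i => pow_zero _)]
  have hmag : ∏ i, magnus k (n + 1) i ^ a i = ∏ j, X j ^ (d - a j) := by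
    simp only [magnus, ← Finset.prod_pow]
    rw [Finset.prod_comm' (t' := Finset.univ) (s' := fun j => Finset.univ.erase j)
      (fun i j => by simp [Finset.mem_erase, and_comm, eq_comm, ne_comm])]
    refine Finset.prod_congr rfl fun j _ => ?_
    rw [Finset.prod_pow_eq_pow_sum]
    congr 1
    have hE := Finset.sum_erase_add Finset.univ a (Finset.mem_univ j)
    rw [hsum] at hE
    omega
  rw [hmag, monomial_eq, Finsupp.prod_fintype _ _ (fun i => pow_zero _)]
  simp only [Finsupp.equivFunOnFinite_symm_apply_apply]
  rw [mul_left_comm, ← Finset.prod_mul_distrib]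
  congr 1
  refine Finset.prod_congr rfl fun i _ => ?_
  rw [← pow_add]
  congr 1
  have h1 := haβ i
  have h2 := hβ i
  omega
end

section
/- Let g_0,…,g_m be nonzero homogeneous polynomials of common degree d ≥ 1 in k[x_0,…,x_n] satisfying the canonical restrictions, and let ĝ_0,…,ĝ_m be the Newton complementary dual set. If F ∈ k[y_0,…,y_m] is a homogeneous polynomial with F(g_0,…,g_m) = 0, then F(ĝ_0,…,ĝ_m) = 0. Consequently the k-algebras k[g_0,…,g_m] and k[ĝ_0,…,ĝ_m] are isomorphic. -/
open MvPolynomial Finset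

namespace NewtonAux
variable {k : Type*} [Field k] {N : ℕ}

lemma symm_apply (f : Fin N → ℕ) (i : Fin N) : (Finsupp.equivFunOnFinite.symm f) i = f i := rfl

lemma degree_eq_sum_univ (a : Fin N →₀ ℕ) : a.degree = ∑ i, a i := by
  rw [Finsupp.degree]
  exact Finset.sum_subset (subset_univ _) (fun i _ hi => Finsupp.notMem_support_iff.mp hi)

lemma prod_X_pow (e : Fin N → ℕ) :
    (∏ j, (X j : MvPolynomial (Fin N) k) ^ e j) = monomial (Finsupp.equivFunOnFinite.symm e) 1 := by
  rw [monomial_eq, C_1, one_mul, Finsupp.prod_fintype _ _ (fun i => pow_zero _)]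
  rfl

lemma aeval_magnus_monomial (a : Fin N →₀ ℕ) (c : k) :
    aeval (magnus k N) (monomial a c) =
      monomial (Finsupp.equivFunOnFinite.symm fun i => ∑ j ∈ univ.erase i, a j) c := by
  rw [aeval_monomial, Finsupp.prod_fintype _ _ (fun i => pow_zero _)]
  have h1 : ∀ i : Fin N, magnus k N i ^ a i
      = ∏ j ∈ univ.erase i, (X j : MvPolynomial (Fin N) k) ^ a i := fun i => by
    rw [magnus, prod_pow]
  simp_rw [h1]
  rw [Finset.prod_comm' (t' := (univ : Finset (Fin N))) (s' := fun j => univ.erase j)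
      (fun i j => by simp [and_comm, eq_comm, ne_comm, Ne])]
  simp_rw [Finset.prod_pow_eq_pow_sum]
  rw [prod_X_pow, algebraMap_eq, C_mul_monomial, mul_one]

lemma aeval_mul_homogeneous {m' : ℕ} {F : MvPolynomial (Fin m') k} {D : ℕ}
    (hF : F.IsHomogeneous D) (M : MvPolynomial (Fin N) k)
    (h : Fin m' → MvPolynomial (Fin N) k) :
    aeval (fun j => M * h j) F = M ^ D * aeval h F := by
  conv_lhs => rw [← support_sum_monomial_coeff F]
  conv_rhs => rw [← support_sum_monomial_coeff F]
  rw [map_sum, map_sum, Finset.mul_sum]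
  refine Finset.sum_congr rfl fun b hb => ?_
  have hdeg : ∑ j, b j = D := by
    have hw := hF (mem_support_iff.mp hb)
    rw [← degree_eq_sum_univ, Finsupp.degree_eq_weight_one]
    exact hw
  rw [aeval_monomial, aeval_monomial, Finsupp.prod_fintype _ _ (fun i => pow_zero _),
      Finsupp.prod_fintype _ _ (fun i => pow_zero _)]
  simp_rw [mul_pow]
  rw [Finset.prod_mul_distrib, Finset.prod_pow_eq_pow_sum, hdeg]
  ring

lemma aeval_magnus_eq (β : Fin N → ℕ) {g : MvPolynomial (Fin N) k} {d : ℕ}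
    (hsum : ∀ a ∈ g.support, ∑ i, a i = d)
    (hab : ∀ a ∈ g.support, ∀ i, a i ≤ β i) (hbd : ∀ i, β i ≤ d) :
    aeval (magnus k N) g =
      monomial (Finsupp.equivFunOnFinite.symm fun i => d - β i) 1 * newtonDualWith β g := by
  conv_lhs => rw [← support_sum_monomial_coeff g]
  rw [map_sum, newtonDualWith, Finset.mul_sum]
  refine Finset.sum_congr rfl fun a ha => ?_
  rw [aeval_magnus_monomial, monomial_mul, one_mul]
  have hexp : (Finsupp.equivFunOnFinite.symm fun i => ∑ j ∈ univ.erase i, a j)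
      = (Finsupp.equivFunOnFinite.symm fun i => d - β i)
        + Finsupp.equivFunOnFinite.symm fun i => β i - a i := by
    ext i
    have h1 := Finset.sum_erase_add univ (⇑a) (mem_univ i)
    have h2 := hab a ha i
    have h3 := hbd i
    have h4 := hsum a ha
    simp only [Finsupp.add_apply, symm_apply]
    omega
  rw [hexp]

lemma aeval_magnus_dual_eq (β : Fin N → ℕ) {g : MvPolynomial (Fin N) k} {d : ℕ}
    (hsum : ∀ a ∈ g.support, ∑ i, a i = d)
    (hab : ∀ a ∈ g.support, ∀ i, a i ≤ β i) (hB : ∀ i, d + β i ≤ ∑ j, β j) :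
    aeval (magnus k N) (newtonDualWith β g) =
      monomial (Finsupp.equivFunOnFinite.symm fun i => (∑ j, β j) - (d + β i)) 1 * g := by
  conv_rhs => rw [← support_sum_monomial_coeff g]
  rw [newtonDualWith, map_sum, Finset.mul_sum]
  refine Finset.sum_congr rfl fun a ha => ?_
  rw [aeval_magnus_monomial, monomial_mul, one_mul]
  have hexp : (Finsupp.equivFunOnFinite.symm fun i =>
        ∑ j ∈ univ.erase i, (Finsupp.equivFunOnFinite.symm fun i' => β i' - a i') j)
      = (Finsupp.equivFunOnFinite.symm fun i => (∑ j, β j) - (d + β i)) + a := by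
    ext i
    have hsub : ∑ j ∈ univ.erase i, (β j - a j)
        = (∑ j ∈ univ.erase i, β j) - ∑ j ∈ univ.erase i, a j :=
      Finset.sum_tsub_distrib _ (fun j _ => hab a ha j)
    simp only [Finsupp.add_apply, symm_apply]
    rw [hsub]
    have h1 := Finset.sum_erase_add univ (⇑a) (mem_univ i)
    have h1' := Finset.sum_erase_add univ β (mem_univ i)
    have h2 := hab a ha i
    have h3 := hB i
    have h4 := hsum a ha
    omega
  rw [hexp]

lemma transfer {m' : ℕ} {h h' : Fin m' → MvPolynomial (Fin N) k}
    {M : MvPolynomial (Fin N) k} (hM : M ≠ 0)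
    (heq : ∀ j, aeval (magnus k N) (h j) = M * h' j)
    {F : MvPolynomial (Fin m') k} {D : ℕ} (hF : F.IsHomogeneous D)
    (hv : aeval h F = 0) : aeval h' F = 0 := by
  have hc := congrArg (aeval (magnus k N)) hv
  rw [map_zero, ← AlgHom.comp_apply, comp_aeval] at hc
  simp_rw [heq] at hc
  rw [aeval_mul_homogeneous hF] at hc
  rcases mul_eq_zero.mp hc with h0 | h0
  · exact absurd h0 (pow_ne_zero _ hM)
  · exact h0

lemma component_vanish {m' δ : ℕ} (hδ : 1 ≤ δ) {h : Fin m' → MvPolynomial (Fin N) k}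
    (hh : ∀ j, (h j).IsHomogeneous δ) {F : MvPolynomial (Fin m') k}
    (hv : aeval h F = 0) (e : ℕ) : aeval h (homogeneousComponent e F) = 0 := by
  by_cases he : e ≤ F.totalDegree
  · have hsum : ∑ i ∈ Finset.range (F.totalDegree + 1),
        aeval h (homogeneousComponent i F) = 0 := by
      rw [← map_sum, sum_homogeneousComponent, hv]
    have hcomp : ∀ i, (aeval h (homogeneousComponent i F)).IsHomogeneous (δ * i) :=
      fun i => (homogeneousComponent_isHomogeneous i F).aeval h hh
    have hc := congrArg (homogeneousComponent (δ * e)) hsum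
    rw [map_sum, map_zero] at hc
    have h0 : ∀ b ∈ Finset.range (F.totalDegree + 1), b ≠ e →
        homogeneousComponent (δ * e) (aeval h (homogeneousComponent b F)) = 0 :=
      fun b _ hbe => MvPolynomial.IsWeightedHomogeneous.weightedHomogeneousComponent_ne
        (δ * e) (hcomp b)
        (fun hEq => hbe (Nat.eq_of_mul_eq_mul_left (lt_of_lt_of_le one_pos hδ) hEq).symm)
    have h1 : e ∉ Finset.range (F.totalDegree + 1) →
        homogeneousComponent (δ * e) (aeval h (homogeneousComponent e F)) = 0 :=
      fun hnot => absurd (Finset.mem_range.mpr (Nat.lt_succ_of_le he)) hnot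
    rw [Finset.sum_eq_single e h0 h1] at hc
    calc aeval h (homogeneousComponent e F)
        = homogeneousComponent (δ * e) (aeval h (homogeneousComponent e F)) :=
          (MvPolynomial.IsWeightedHomogeneous.weightedHomogeneousComponent_same (hcomp e)).symm
      _ = 0 := hc
  · rw [homogeneousComponent_eq_zero e F (lt_of_not_ge he), map_zero]

end NewtonAux

open NewtonAux

set_option maxHeartbeats 1000000 in
theorem newtonDual_preserves_relations_and_algebra_iso {k : Type*} [Field k]
    {n m d D : ℕ} (hn : 1 ≤ n) (hd : 1 ≤ d)
    (g : Fin (m + 1) → MvPolynomial (Fin (n + 1)) k)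
    (hne : ∀ j, g j ≠ 0) (hhom : ∀ j, (g j).IsHomogeneous d)
    -- canonical restrictions: trivial gcd and every variable occurs
    (hgcd : ∀ p : MvPolynomial (Fin (n + 1)) k, (∀ j, p ∣ g j) → IsUnit p)
    (hvar : ∀ i, ∃ j, (g j).degreeOf i ≠ 0)
    (β : Fin (n + 1) → ℕ)
    (hβ : ∀ i, β i = Finset.univ.sup fun j => (g j).degreeOf i)
    (F : MvPolynomial (Fin (m + 1)) k) (hF : F.IsHomogeneous D)
    (hvanish : aeval g F = 0) :
    aeval (fun j => newtonDualWith β (g j)) F = 0 ∧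
      Nonempty (Algebra.adjoin k (Set.range g) ≃ₐ[k]
        Algebra.adjoin k (Set.range fun j => newtonDualWith β (g j))) := by
  classical
  have hab : ∀ j, ∀ a ∈ (g j).support, ∀ i, a i ≤ β i := by
    intro j a ha i
    calc a i ≤ (g j).degreeOf i := by
          rw [degreeOf_eq_sup]; exact Finset.le_sup (f := fun m => m i) ha
      _ ≤ β i := by
          rw [hβ i]; exact Finset.le_sup (f := fun j => (g j).degreeOf i) (mem_univ j)
  have hsupd : ∀ j, ∀ a ∈ (g j).support, ∑ i, a i = d := by
    intro j a ha
    have hw := (hhom j) (mem_support_iff.mp ha)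
    rw [← degree_eq_sum_univ, Finsupp.degree_eq_weight_one]
    exact hw
  have hbd : ∀ i, β i ≤ d := by
    intro i; rw [hβ i]
    apply Finset.sup_le; intro j _
    calc (g j).degreeOf i ≤ (g j).totalDegree := degreeOf_le_totalDegree _ i
      _ = d := (hhom j).totalDegree (hne j)
  have hbpos : ∀ i, 1 ≤ β i := by
    intro i
    obtain ⟨j, hj⟩ := hvar i
    rw [hβ i]
    exact le_trans (Nat.one_le_iff_ne_zero.mpr hj)
      (Finset.le_sup (f := fun j => (g j).degreeOf i) (mem_univ j))
  have hXunit : ∀ i : Fin (n + 1), ¬ IsUnit (X i : MvPolynomial (Fin (n + 1)) k) := by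
    intro i hu
    obtain ⟨q, hq⟩ := hu.exists_right_inv
    have hc := congrArg (eval (fun _ => (0 : k))) hq
    simp at hc
  have hB : ∀ i, d + β i ≤ ∑ j, β j := by
    intro i
    have hdvd : ∃ j, ¬ (X i : MvPolynomial (Fin (n + 1)) k) ∣ g j := by
      by_contra hcon; push_neg at hcon
      exact hXunit i (hgcd _ hcon)
    obtain ⟨j, hj⟩ := hdvd
    have hex : ∃ a ∈ (g j).support, a i = 0 := by
      by_contra hcon; push_neg at hcon
      apply hj
      conv_rhs => rw [← support_sum_monomial_coeff (g j)]
      exact Finset.dvd_sum fun a ha => X_dvd_monomial.mpr (Or.inr (hcon a ha))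
    obtain ⟨a, ha, hai⟩ := hex
    have h1 : ∑ l ∈ univ.erase i, a l ≤ ∑ l ∈ univ.erase i, β l :=
      Finset.sum_le_sum fun l _ => hab j a ha l
    have h2 := Finset.sum_erase_add univ (⇑a) (mem_univ i)
    have h3 := Finset.sum_erase_add univ β (mem_univ i)
    have h4 := hsupd j a ha
    omega
  set gd := fun j => newtonDualWith β (g j) with hgdef
  set M1 : MvPolynomial (Fin (n + 1)) k :=
    monomial (Finsupp.equivFunOnFinite.symm fun i => d - β i) 1 with hM1def
  set M2 : MvPolynomial (Fin (n + 1)) k :=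
    monomial (Finsupp.equivFunOnFinite.symm fun i => (∑ j, β j) - (d + β i)) 1 with hM2def
  have hM1 : M1 ≠ 0 := by
    rw [hM1def, Ne, monomial_eq_zero]; exact one_ne_zero
  have hM2 : M2 ≠ 0 := by
    rw [hM2def, Ne, monomial_eq_zero]; exact one_ne_zero
  have hfwd : ∀ j, aeval (magnus k (n + 1)) (g j) = M1 * gd j := fun j =>
    aeval_magnus_eq β (hsupd j) (hab j) hbd
  have hbwd : ∀ j, aeval (magnus k (n + 1)) (gd j) = M2 * g j := fun j =>
    aeval_magnus_dual_eq β (hsupd j) (hab j) hB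
  have hdualhom : ∀ j, (gd j).IsHomogeneous ((∑ i, β i) - d) := by
    intro j
    rw [hgdef]
    apply IsHomogeneous.sum
    intro a ha
    apply isHomogeneous_monomial
    rw [degree_eq_sum_univ]
    simp only [symm_apply]
    rw [Finset.sum_tsub_distrib _ (fun i _ => hab j a ha i), hsupd j a ha]
  have hdB : 1 ≤ (∑ i, β i) - d := by
    have h1 := hB 0
    have h2 := hbpos 0
    omega
  have hpart1 : aeval gd F = 0 := transfer hM1 hfwd hF hvanish
  refine ⟨hpart1, ?_⟩
  have hker : RingHom.ker (aeval g : MvPolynomial (Fin (m + 1)) k →ₐ[k] _)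
      = RingHom.ker (aeval gd : MvPolynomial (Fin (m + 1)) k →ₐ[k] _) := by
    ext F'
    simp only [RingHom.mem_ker]
    constructor
    · intro hv
      conv_lhs => rw [← sum_homogeneousComponent F']
      rw [map_sum]
      refine Finset.sum_eq_zero fun e _ => ?_
      exact transfer hM1 hfwd (homogeneousComponent_isHomogeneous e F')
        (component_vanish hd hhom hv e)
    · intro hv
      conv_lhs => rw [← sum_homogeneousComponent F']
      rw [map_sum]
      refine Finset.sum_eq_zero fun e _ => ?_
      exact transfer hM2 hbwd (homogeneousComponent_isHomogeneous e F')
        (component_vanish hdB hdualhom hv e)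
  have e1 : Algebra.adjoin k (Set.range g)
      = (aeval g : MvPolynomial (Fin (m + 1)) k →ₐ[k] _).range :=
    Algebra.adjoin_range_eq_range_aeval k g
  have e2 : Algebra.adjoin k (Set.range gd)
      = (aeval gd : MvPolynomial (Fin (m + 1)) k →ₐ[k] _).range :=
    Algebra.adjoin_range_eq_range_aeval k gd
  exact ⟨(Subalgebra.equivOfEq _ _ e1).trans <|
    (Ideal.quotientKerEquivRange (aeval g : MvPolynomial (Fin (m + 1)) k →ₐ[k] _)).symm.trans <|
    (Ideal.quotientEquivAlgOfEq k hker).trans <|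
    (Ideal.quotientKerEquivRange (aeval gd : MvPolynomial (Fin (m + 1)) k →ₐ[k] _)).trans (Subalgebra.equivOfEq _ _ e2.symm)⟩
end

section
/- Let n ≥ 1. The products x̂_0 = x_1⋯x_n, x̂_1 = x_0 x_2⋯x_n, …, x̂_n = x_0⋯x_{n−1} are algebraically independent over k in k[x_0,…,x_n]. -/
open MvPolynomial Finset

/-- The exponent map induced by `magnus` on monomials. -/
noncomputable def mdual {N : ℕ} (a : Fin N →₀ ℕ) : Fin N →₀ ℕ :=
  Finsupp.equivFunOnFinite.symm fun i => (∑ j, a j) - a i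

lemma mdual_apply {N : ℕ} (a : Fin N →₀ ℕ) (i : Fin N) :
    mdual a i = (∑ j, a j) - a i := rfl

lemma le_sum_self {N : ℕ} (a : Fin N →₀ ℕ) (i : Fin N) : a i ≤ ∑ j, a j :=
  Finset.single_le_sum (fun j _ => Nat.zero_le _) (mem_univ i)

lemma sum_mdual {N : ℕ} (a : Fin N →₀ ℕ) :
    ∑ i, mdual a i + ∑ j, a j = N * ∑ j, a j := by
  have : ∑ i, (mdual a i + a i) = ∑ i : Fin N, ∑ j, a j := by
    refine Finset.sum_congr rfl fun i _ => ?_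
    rw [mdual_apply, Nat.sub_add_cancel (le_sum_self a i)]
  rw [← Finset.sum_add_distrib, this, Finset.sum_const, card_univ, Fintype.card_fin,
    smul_eq_mul]

lemma mdual_injective {n : ℕ} (hn : 1 ≤ n) :
    Function.Injective (mdual (N := n + 1)) := by
  intro a b hab
  have hsum : ∑ j, a j = ∑ j, b j := by
    have h1 := sum_mdual a
    have h2 := sum_mdual b
    rw [hab, Nat.succ_mul] at h1
    rw [Nat.succ_mul] at h2
    have h3 : n * ∑ j, a j = n * ∑ j, b j := by omega
    exact Nat.eq_of_mul_eq_mul_left (by omega) h3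
  ext i
  have : mdual a i = mdual b i := by rw [hab]
  rw [mdual_apply, mdual_apply, ← hsum] at this
  have ha := le_sum_self a i
  have hb := le_sum_self b i
  rw [hsum] at ha
  omega

lemma aeval_magnus_monomial {k : Type*} [CommSemiring k] {N : ℕ}
    (a : Fin N →₀ ℕ) (c : k) :
    aeval (magnus k N) (monomial a c) = monomial (mdual a) c := by
  rw [aeval_monomial, Finsupp.prod_pow]
  have key : ∏ i, magnus k N i ^ a i = ∏ j, (X j : MvPolynomial (Fin N) k) ^ mdual a j := by
    have h1 : ∀ i : Fin N, magnus k N i ^ a i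
        = ∏ j ∈ Finset.univ.erase i, (X j : MvPolynomial (Fin N) k) ^ a i := by
      intro i; rw [magnus, Finset.prod_pow]
    simp_rw [h1]
    rw [Finset.prod_comm' (t' := Finset.univ) (s' := fun j => Finset.univ.erase j)
      (fun x y => by simp [Finset.mem_erase, eq_comm, and_comm])]
    refine Finset.prod_congr rfl fun j _ => ?_
    rw [Finset.prod_pow_eq_pow_sum, mdual_apply]
    congr 1
    have h2 : a j + ∑ x ∈ Finset.univ.erase j, a x = ∑ x, a x :=
      Finset.add_sum_erase Finset.univ (fun i => a i) (mem_univ j)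
    omega
  rw [key, monomial_eq, Finsupp.prod_pow, algebraMap_eq]

theorem magnus_algebraicIndependent {k : Type*} [Field k] {n : ℕ} (hn : 1 ≤ n) :
    AlgebraicIndependent k (magnus k (n + 1)) := by
  rw [algebraicIndependent_iff]
  intro p hp
  have hrw : aeval (magnus k (n + 1)) p
      = ∑ a ∈ p.support, monomial (mdual a) (coeff a p) := by
    conv_lhs => rw [← p.support_sum_monomial_coeff]
    rw [map_sum]
    exact Finset.sum_congr rfl fun a _ => aeval_magnus_monomial a (coeff a p)
  ext a
  by_cases ha : a ∈ p.support
  · have : coeff (mdual a) (aeval (magnus k (n + 1)) p) = coeff a p := by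
      rw [hrw, coeff_sum]
      rw [Finset.sum_eq_single a]
      · rw [coeff_monomial, if_pos rfl]
      · intro b _ hb
        rw [coeff_monomial, if_neg]
        exact fun h => hb (mdual_injective hn h)
      · intro h; exact absurd ha h
    rw [hp] at this
    simpa using this.symm
  · simpa using MvPolynomial.notMem_support_iff.mp ha
end

section
/- Let g_0,…,g_m ⊂ k[x_0,…,x_n] be nonzero forms of common degree d ≥ 1, with Newton dual set ĝ_0,…,ĝ_m (relative to the common directrix vector). Let p(x,y) ∈ k[x_0,…,x_n,y_0,…,y_m] be bihomogeneous. If p(x_0,…,x_n, g_0,…,g_m) = 0, then p(x̂_0,…,x̂_n, ĝ_0,…,ĝ_m) = 0, where x̂_i = ∏_{j≠i} x_j. In particular, any bihomogeneous element of the presentation ideal of the Rees algebra of (g_0,…,g_m) yields, after the substitution x ↦ x̂, an element vanishing on (x̂, ĝ). -/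
open MvPolynomial Finset

lemma prod_X_pow {k : Type*} [CommSemiring k] {N : ℕ} (c : Fin N → ℕ) :
    ∏ j, (X j : MvPolynomial (Fin N) k) ^ c j
      = monomial (Finsupp.equivFunOnFinite.symm c) 1 := by
  rw [monomial_eq, Finsupp.prod_pow]
  simp

lemma magnus_prod_pow {k : Type*} [CommSemiring k] {N : ℕ} (a : Fin N →₀ ℕ) :
    ∏ i, (magnus k N i) ^ a i
      = monomial (Finsupp.equivFunOnFinite.symm fun ℓ => (∑ i, a i) - a ℓ) (1 : k) := by
  simp only [magnus, ← Finset.prod_pow]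
  rw [Finset.prod_comm' (t' := Finset.univ) (s' := fun j => Finset.univ.erase j)
    (by intro x y; simp [eq_comm, ne_comm, and_comm])]
  have h1 : ∀ j : Fin N, ∏ i ∈ Finset.univ.erase j, (X j : MvPolynomial (Fin N) k) ^ a i
      = X j ^ ((∑ i, a i) - a j) := by
    intro j
    rw [Finset.prod_pow_eq_pow_sum]
    congr 1
    have := Finset.add_sum_erase Finset.univ a (Finset.mem_univ j)
    omega
  rw [Finset.prod_congr rfl fun j _ => h1 j, _root_.prod_X_pow]

lemma aeval_magnus_eq {k : Type*} [CommSemiring k] {N d : ℕ}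
    (g : MvPolynomial (Fin N) k) (hg : g.IsHomogeneous d) (β : Fin N → ℕ)
    (hβ₁ : ∀ i, g.degreeOf i ≤ β i) (hβ₂ : ∀ i, β i ≤ d) :
    aeval (magnus k N) g
      = monomial (Finsupp.equivFunOnFinite.symm fun i => d - β i) 1 * newtonDualWith β g := by
  conv_lhs => rw [g.as_sum]
  rw [map_sum, newtonDualWith, Finset.mul_sum]
  refine Finset.sum_congr rfl fun a ha => ?_
  rw [aeval_monomial, Finsupp.prod_pow, magnus_prod_pow, algebraMap_eq, C_mul_monomial,
    monomial_mul, mul_one, one_mul]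
  have hsum : ∑ i, a i = d := by
    have := hg (mem_support_iff.mp ha)
    simpa [Finsupp.weight_apply, Finsupp.sum_fintype] using this
  have hle : ∀ i, a i ≤ β i := by
    intro i
    refine le_trans ?_ (hβ₁ i)
    rw [degreeOf_eq_sup]
    exact Finset.le_sup (f := fun m => m i) ha
  have hw : (Finsupp.equivFunOnFinite.symm fun ℓ => (∑ i, a i) - a ℓ)
      = (Finsupp.equivFunOnFinite.symm fun i => d - β i)
        + Finsupp.equivFunOnFinite.symm fun i => β i - a i := by
    refine Finsupp.ext fun ℓ => ?_
    have h1 := hle ℓ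
    have h2 := hβ₂ ℓ
    simp only [Finsupp.coe_add, Pi.add_apply, Finsupp.coe_equivFunOnFinite_symm, hsum]
    omega
  rw [hw]

theorem rees_relation_dual {k : Type*} [Field k] {n m d dx dy : ℕ}
    (hn : 1 ≤ n) (hd : 1 ≤ d)
    (g : Fin (m + 1) → MvPolynomial (Fin (n + 1)) k)
    (hne : ∀ j, g j ≠ 0) (hhom : ∀ j, (g j).IsHomogeneous d)
    (β : Fin (n + 1) → ℕ)
    (hβ : ∀ i, β i = Finset.univ.sup fun j => (g j).degreeOf i)
    (p : MvPolynomial (Fin (n + 1) ⊕ Fin (m + 1)) k)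
    (hbihom : ∀ a ∈ p.support,
      (∑ i, a (Sum.inl i)) = dx ∧ (∑ j, a (Sum.inr j)) = dy)
    (hvanish : aeval (Sum.elim (fun i => (X i : MvPolynomial (Fin (n + 1)) k)) g) p = 0) :
    aeval (Sum.elim (magnus k (n + 1)) (fun j => newtonDualWith β (g j))) p = 0 := by
  set M : MvPolynomial (Fin (n + 1)) k :=
    monomial (Finsupp.equivFunOnFinite.symm fun i => d - β i) 1 with hM
  have hβ₂ : ∀ i, β i ≤ d := by
    intro i
    rw [hβ]
    refine Finset.sup_le fun j _ => ?_
    exact le_of_le_of_eq (degreeOf_le_totalDegree _ _) ((hhom j).totalDegree (hne j))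
  have hdual : ∀ j, aeval (magnus k (n + 1)) (g j) = M * newtonDualWith β (g j) := by
    intro j
    refine aeval_magnus_eq (g j) (hhom j) β (fun i => ?_) hβ₂
    rw [hβ]
    exact Finset.le_sup (f := fun j => degreeOf i (g j)) (Finset.mem_univ j)
  have hcomp : (aeval (magnus k (n + 1))).comp
      (aeval (Sum.elim (fun i => (X i : MvPolynomial (Fin (n + 1)) k)) g))
      = aeval (Sum.elim (magnus k (n + 1)) (fun j => M * newtonDualWith β (g j))) := by
    apply MvPolynomial.algHom_ext
    rintro (i | j)
    · simp only [AlgHom.comp_apply, aeval_X, Sum.elim_inl]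
    · simp only [AlgHom.comp_apply, aeval_X, Sum.elim_inr]
      exact hdual j
  have h0 : aeval (Sum.elim (magnus k (n + 1)) (fun j => M * newtonDualWith β (g j))) p = 0 := by
    rw [← hcomp, AlgHom.comp_apply, hvanish, map_zero]
  have hfac : aeval (Sum.elim (magnus k (n + 1)) (fun j => M * newtonDualWith β (g j))) p
      = M ^ dy * aeval (Sum.elim (magnus k (n + 1)) (fun j => newtonDualWith β (g j))) p := by
    conv_lhs => rw [p.as_sum]
    conv_rhs => rw [p.as_sum]
    rw [map_sum, map_sum, Finset.mul_sum]
    refine Finset.sum_congr rfl fun a ha => ?_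
    rw [aeval_monomial, aeval_monomial, Finsupp.prod_pow, Finsupp.prod_pow,
      Fintype.prod_sum_type, Fintype.prod_sum_type]
    simp only [Sum.elim_inl, Sum.elim_inr, mul_pow, Finset.prod_mul_distrib,
      Finset.prod_pow_eq_pow_sum, (hbihom a ha).2]
    ring
  have hMne : M ^ dy ≠ 0 := by
    apply pow_ne_zero
    rw [hM]
    simp [monomial_eq_zero]
  rw [hfac] at h0
  exact (mul_eq_zero.mp h0).resolve_left hMne
end
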